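/- Let 0 < a < 1, b = 0 and c > 0. Then the Abel equation y′(x) = c·cos x·y(x)² + (sin x − a)·y(x)³ has at most one 2π-periodic solution y with y(x) > 0 for all x. -/

import Mathlib

open Real

lemma abel_w_repr (a c : ℝ) (y₁ y₂ : ℝ → ℝ)
    (hsol₁ : ∀ x : ℝ, HasDerivAt y₁
      (c * Real.cos x * (y₁ x) ^ 2 + (Real.sin x - a) * (y₁ x) ^ 3) x)
    (hpos₁ : ∀ x : ℝ, 0 < y₁ x)
    (hsol₂ : ∀ x : ℝ, HasDerivAt y₂
      (c * Real.cos x * (y₂ x) ^ 2 + (Real.sin x - a) * (y₂ x) ^ 3) x)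
    (hpos₂ : ∀ x : ℝ, 0 < y₂ x) (x : ℝ) :
    (y₁ x)⁻¹ - (y₂ x)⁻¹
      = ((y₁ 0)⁻¹ - (y₂ 0)⁻¹) *
        Real.exp (∫ t in (0:ℝ)..x, (Real.sin t - a) * (y₁ t * y₂ t)) := by
  have cont₁ : Continuous y₁ :=
    continuous_iff_continuousAt.2 fun x => (hsol₁ x).continuousAt
  have cont₂ : Continuous y₂ :=
    continuous_iff_continuousAt.2 fun x => (hsol₂ x).continuousAt
  set g : ℝ → ℝ := fun t => (Real.sin t - a) * (y₁ t * y₂ t) with hgdef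
  have contg : Continuous g := by
    apply Continuous.mul
    · exact Real.continuous_sin.sub continuous_const
    · exact cont₁.mul cont₂
  set G : ℝ → ℝ := fun x => ∫ t in (0:ℝ)..x, g t with hGdef
  have hG : ∀ x, HasDerivAt G (g x) x :=
    fun x => (contg.integral_hasStrictDerivAt 0 x).hasDerivAt
  set w : ℝ → ℝ := fun x => (y₁ x)⁻¹ - (y₂ x)⁻¹ with hwdef
  have hw : ∀ x, HasDerivAt w (g x * w x) x := by
    intro x
    have h₁ := (hsol₁ x).inv (hpos₁ x).ne'
    have h₂ := (hsol₂ x).inv (hpos₂ x).ne'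
    have h := h₁.sub h₂
    refine h.congr_deriv ?_
    have e₁ : y₁ x ≠ 0 := (hpos₁ x).ne'
    have e₂ : y₂ x ≠ 0 := (hpos₂ x).ne'
    simp only [hgdef, hwdef]
    field_simp
    ring
  have key : ∀ z, w z * Real.exp (-(G z)) = w 0 * Real.exp (-(G 0)) := by
    intro z
    apply is_const_of_deriv_eq_zero (f := fun x => w x * Real.exp (-(G x)))
    · intro u
      exact ((hw u).mul (((hG u).neg).exp)).differentiableAt
    · intro u
      have hd : HasDerivAt (fun x => w x * Real.exp (-(G x))) 0 u := by
        have := (hw u).mul (((hG u).neg).exp)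
        refine this.congr_deriv ?_
        ring
      exact hd.deriv
  have hG0 : G 0 = 0 := intervalIntegral.integral_same
  have := key x
  rw [hG0] at this
  simp only [neg_zero, Real.exp_zero, mul_one] at this
  have h1 : Real.exp (-(G x)) * Real.exp (G x) = 1 := by
    rw [← Real.exp_add]; simp
  calc w x = w x * (Real.exp (-(G x)) * Real.exp (G x)) := by rw [h1, mul_one]
    _ = (w x * Real.exp (-(G x))) * Real.exp (G x) := by ring
    _ = w 0 * Real.exp (G x) := by rw [this]


lemma abel_int (a c : ℝ) (y : ℝ → ℝ)
    (hsol : ∀ x : ℝ, HasDerivAt y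
      (c * Real.cos x * (y x) ^ 2 + (Real.sin x - a) * (y x) ^ 3) x)
    (hper : ∀ x : ℝ, y (x + 2 * Real.pi) = y x)
    (hpos : ∀ x : ℝ, 0 < y x) :
    ∫ x in (0:ℝ)..(2 * Real.pi), c * Real.cos x * (y x)⁻¹ = 2 * Real.pi * a := by
  have cont : Continuous y :=
    continuous_iff_continuousAt.2 fun x => (hsol x).continuousAt
  set F : ℝ → ℝ := fun x => -(1/2) * ((y x) ^ 2)⁻¹ with hF
  have hFd : ∀ x, HasDerivAt F (c * Real.cos x * (y x)⁻¹ + (Real.sin x - a)) x := by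
    intro x
    have hne : y x ≠ 0 := (hpos x).ne'
    have h2 : HasDerivAt (fun x => (y x) ^ 2)
        (2 * y x * (c * Real.cos x * (y x) ^ 2 + (Real.sin x - a) * (y x) ^ 3)) x := by
      have := (hsol x).pow 2
      refine this.congr_deriv ?_; push_cast; ring
    have h3 := (h2.inv (pow_ne_zero 2 hne)).const_mul (-(1/2 : ℝ))
    refine h3.congr_deriv ?_
    field_simp
  have hcont' : Continuous fun x => c * Real.cos x * (y x)⁻¹ + (Real.sin x - a) := by
    apply Continuous.add
    · exact (continuous_const.mul Real.continuous_cos).mul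
        (cont.inv₀ fun x => (hpos x).ne')
    · exact Real.continuous_sin.sub continuous_const
  have hint := intervalIntegral.integral_eq_sub_of_hasDerivAt
    (f := F) (f' := fun x => c * Real.cos x * (y x)⁻¹ + (Real.sin x - a))
    (fun x _ => hFd x) (hcont'.intervalIntegrable 0 (2 * Real.pi))
  have hy2 : y (2 * Real.pi) = y 0 := by
    have := hper 0; rwa [zero_add] at this
  have hF0 : F (2 * Real.pi) - F 0 = 0 := by simp [hF, hy2]
  rw [hF0] at hint
  have hsplit : (∫ x in (0:ℝ)..(2 * Real.pi), c * Real.cos x * (y x)⁻¹ + (Real.sin x - a))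
      = (∫ x in (0:ℝ)..(2 * Real.pi), c * Real.cos x * (y x)⁻¹)
        + ∫ x in (0:ℝ)..(2 * Real.pi), (Real.sin x - a) := by
    apply intervalIntegral.integral_add
    · exact ((continuous_const.mul Real.continuous_cos).mul
        (cont.inv₀ fun x => (hpos x).ne')).intervalIntegrable 0 (2 * Real.pi)
    · exact (Real.continuous_sin.sub continuous_const).intervalIntegrable 0 (2 * Real.pi)
  have hsa : (∫ x in (0:ℝ)..(2 * Real.pi), (Real.sin x - a)) = -(2 * Real.pi * a) := by
    rw [intervalIntegral.integral_sub
      (Real.continuous_sin.intervalIntegrable 0 (2 * Real.pi))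
      (continuous_const.intervalIntegrable 0 (2 * Real.pi))]
    rw [integral_sin, intervalIntegral.integral_const]
    simp [Real.cos_two_pi]
  rw [hsplit, hsa] at hint
  linarith

lemma abel_false (a c : ℝ) (ha0 : 0 < a) (ha1 : a < 1) (hc : 0 < c)
    (y₁ y₂ : ℝ → ℝ)
    (hsol₁ : ∀ x : ℝ, HasDerivAt y₁
      (c * Real.cos x * (y₁ x) ^ 2 + (Real.sin x - a) * (y₁ x) ^ 3) x)
    (hper₁ : ∀ x : ℝ, y₁ (x + 2 * Real.pi) = y₁ x)
    (hpos₁ : ∀ x : ℝ, 0 < y₁ x)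
    (hsol₂ : ∀ x : ℝ, HasDerivAt y₂
      (c * Real.cos x * (y₂ x) ^ 2 + (Real.sin x - a) * (y₂ x) ^ 3) x)
    (hper₂ : ∀ x : ℝ, y₂ (x + 2 * Real.pi) = y₂ x)
    (hpos₂ : ∀ x : ℝ, 0 < y₂ x)
    (hw0 : 0 < (y₁ 0)⁻¹ - (y₂ 0)⁻¹) : False := by
  have cont₁ : Continuous y₁ :=
    continuous_iff_continuousAt.2 fun x => (hsol₁ x).continuousAt
  have cont₂ : Continuous y₂ :=
    continuous_iff_continuousAt.2 fun x => (hsol₂ x).continuousAt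
  set g : ℝ → ℝ := fun t => (Real.sin t - a) * (y₁ t * y₂ t) with hgdef
  have contg : Continuous g :=
    (Real.continuous_sin.sub continuous_const).mul (cont₁.mul cont₂)
  set w : ℝ → ℝ := fun x => (y₁ x)⁻¹ - (y₂ x)⁻¹ with hwdef
  have contw : Continuous w :=
    (cont₁.inv₀ fun x => (hpos₁ x).ne').sub (cont₂.inv₀ fun x => (hpos₂ x).ne')
  have hwrep := abel_w_repr a c y₁ y₂ hsol₁ hpos₁ hsol₂ hpos₂
  have hwpos : ∀ x, 0 < w x := by
    intro x
    rw [hwdef]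
    simp only
    rw [hwrep x]
    exact mul_pos hw0 (Real.exp_pos _)
  -- derivative of w
  have hw : ∀ x, HasDerivAt w (g x * w x) x := by
    intro x
    have h₁ := (hsol₁ x).inv (hpos₁ x).ne'
    have h₂ := (hsol₂ x).inv (hpos₂ x).ne'
    have h := h₁.sub h₂
    refine h.congr_deriv ?_
    have e₁ : y₁ x ≠ 0 := (hpos₁ x).ne'
    have e₂ : y₂ x ≠ 0 := (hpos₂ x).ne'
    simp only [hgdef, hwdef]
    field_simp
    ring
  have contgw : Continuous fun x => g x * w x := contg.mul contw
  have hw2pi : w (2 * Real.pi) = w 0 := by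
    have h1 := hper₁ 0; have h2 := hper₂ 0
    rw [zero_add] at h1 h2
    simp only [hwdef, h1, h2]
  -- I1 : ∫ cos * w = 0
  have hI1 : (∫ x in (0:ℝ)..(2 * Real.pi), Real.cos x * w x) = 0 := by
    have e₁ := abel_int a c y₁ hsol₁ hper₁ hpos₁
    have e₂ := abel_int a c y₂ hsol₂ hper₂ hpos₂
    have hsub : (∫ x in (0:ℝ)..(2 * Real.pi),
        (c * Real.cos x * (y₁ x)⁻¹ - c * Real.cos x * (y₂ x)⁻¹)) = 0 := by
      rw [intervalIntegral.integral_sub (f := fun x => c * Real.cos x * (y₁ x)⁻¹)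
        (g := fun x => c * Real.cos x * (y₂ x)⁻¹)
        (((continuous_const.mul Real.continuous_cos).mul
          (cont₁.inv₀ fun x => (hpos₁ x).ne')).intervalIntegrable _ _)
        (((continuous_const.mul Real.continuous_cos).mul
          (cont₂.inv₀ fun x => (hpos₂ x).ne')).intervalIntegrable _ _),
        e₁, e₂, sub_self]
    have heq : (∫ x in (0:ℝ)..(2 * Real.pi), c * (Real.cos x * w x))
        = ∫ x in (0:ℝ)..(2 * Real.pi),
            (c * Real.cos x * (y₁ x)⁻¹ - c * Real.cos x * (y₂ x)⁻¹) :=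
      intervalIntegral.integral_congr (fun x _ => by simp only [hwdef]; ring)
    have : (∫ x in (0:ℝ)..(2 * Real.pi), c * (Real.cos x * w x)) = 0 := heq.trans hsub
    rw [intervalIntegral.integral_const_mul] at this
    exact (mul_eq_zero.1 this).resolve_left hc.ne'
  -- I2 : ∫ g * w = 0
  have hI2 : (∫ x in (0:ℝ)..(2 * Real.pi), g x * w x) = 0 := by
    rw [intervalIntegral.integral_eq_sub_of_hasDerivAt (f := w)
      (fun x _ => hw x) (contgw.intervalIntegrable _ _), hw2pi, sub_self]
  -- I3 : ∫ sin * (g * w) = 0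
  have hI3 : (∫ x in (0:ℝ)..(2 * Real.pi), Real.sin x * (g x * w x)) = 0 := by
    have hd : ∀ x, HasDerivAt (fun x => Real.sin x * w x)
        (Real.cos x * w x + Real.sin x * (g x * w x)) x := by
      intro x
      exact (Real.hasDerivAt_sin x).mul (hw x)
    have hcc : Continuous fun x => Real.cos x * w x + Real.sin x * (g x * w x) :=
      (Real.continuous_cos.mul contw).add (Real.continuous_sin.mul contgw)
    have hint := intervalIntegral.integral_eq_sub_of_hasDerivAt
      (fun x _ => hd x) (hcc.intervalIntegrable (0:ℝ) (2 * Real.pi))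
    have hz : Real.sin (2 * Real.pi) * w (2 * Real.pi) - Real.sin 0 * w 0 = 0 := by
      simp [Real.sin_two_pi]
    rw [hz] at hint
    rw [intervalIntegral.integral_add (f := fun x => Real.cos x * w x)
      (g := fun x => Real.sin x * (g x * w x))
      ((Real.continuous_cos.mul contw).intervalIntegrable _ _)
      ((Real.continuous_sin.mul contgw).intervalIntegrable _ _), hI1] at hint
    linarith
  -- I4 : ∫ (sin - a) * (g * w) = 0, but integrand is (sin-a)^2 y₁ y₂ w ≥ 0
  have hI4 : (∫ x in (0:ℝ)..(2 * Real.pi), (Real.sin x - a) ^ 2 * (y₁ x * y₂ x) * w x) = 0 := by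
    have : (∫ x in (0:ℝ)..(2 * Real.pi),
        (Real.sin x * (g x * w x) - a * (g x * w x))) = 0 := by
      rw [intervalIntegral.integral_sub (f := fun x => Real.sin x * (g x * w x))
        (g := fun x => a * (g x * w x))
        ((Real.continuous_sin.mul contgw).intervalIntegrable _ _)
        ((continuous_const.mul contgw).intervalIntegrable _ _),
        hI3, intervalIntegral.integral_const_mul, hI2]
      ring
    have heq : (∫ x in (0:ℝ)..(2 * Real.pi), (Real.sin x - a) ^ 2 * (y₁ x * y₂ x) * w x)
        = ∫ x in (0:ℝ)..(2 * Real.pi),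
            (Real.sin x * (g x * w x) - a * (g x * w x)) :=
      intervalIntegral.integral_congr (fun x _ => by simp only [hgdef, hwdef]; ring)
    exact heq.trans this
  -- positivity
  set f : ℝ → ℝ := fun x => (Real.sin x - a) ^ 2 * (y₁ x * y₂ x) * w x with hfdef
  have contf : Continuous f := by
    apply Continuous.mul
    · exact (((Real.continuous_sin.sub continuous_const).pow 2).mul (cont₁.mul cont₂))
    · exact contw
  have hfnonneg : ∀ x, 0 ≤ f x := by
    intro x
    have := hwpos x
    have := hpos₁ x
    have := hpos₂ x
    positivity
  have hsplit : (∫ x in (0:ℝ)..(2 * Real.pi), f x)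
      = (∫ x in (0:ℝ)..Real.pi, f x) + ∫ x in Real.pi..(2 * Real.pi), f x := by
    rw [intervalIntegral.integral_add_adjacent_intervals
      (contf.intervalIntegrable _ _) (contf.intervalIntegrable _ _)]
  have h1nonneg : 0 ≤ ∫ x in (0:ℝ)..Real.pi, f x :=
    intervalIntegral.integral_nonneg Real.pi_pos.le (fun x _ => hfnonneg x)
  have h2pos : 0 < ∫ x in Real.pi..(2 * Real.pi), f x := by
    apply intervalIntegral.intervalIntegral_pos_of_pos_on
      (contf.intervalIntegrable _ _)
    · intro x hx
      obtain ⟨hx1, hx2⟩ := hx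
      have hsinneg : Real.sin x < 0 := by
        have h1 : Real.sin (x - Real.pi) > 0 :=
          Real.sin_pos_of_pos_of_lt_pi (by linarith) (by linarith)
        have h2 := Real.sin_add_pi (x - Real.pi)
        rw [show x - Real.pi + Real.pi = x by ring] at h2
        linarith
      have hne : Real.sin x - a ≠ 0 := by linarith
      have hw' := hwpos x
      have hy1 := hpos₁ x
      have hy2 := hpos₂ x
      simp only [hfdef]
      positivity
    · linarith [Real.pi_pos]
  rw [hsplit] at hI4
  linarith

/-- For `0 < a < 1`, `b = 0`, `c > 0`, the Abel equation
`y′ = c·cos x·y² + (sin x − a)·y³` has at most one everywhere-positive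
2π-periodic solution. -/
theorem abel_at_most_one_positive_periodic_solution
    (a c : ℝ) (ha0 : 0 < a) (ha1 : a < 1) (hc : 0 < c)
    (y₁ y₂ : ℝ → ℝ)
    (hsol₁ : ∀ x : ℝ, HasDerivAt y₁
      (c * Real.cos x * (y₁ x) ^ 2 + (Real.sin x - a) * (y₁ x) ^ 3) x)
    (hper₁ : ∀ x : ℝ, y₁ (x + 2 * Real.pi) = y₁ x)
    (hpos₁ : ∀ x : ℝ, 0 < y₁ x)
    (hsol₂ : ∀ x : ℝ, HasDerivAt y₂
      (c * Real.cos x * (y₂ x) ^ 2 + (Real.sin x - a) * (y₂ x) ^ 3) x)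
    (hper₂ : ∀ x : ℝ, y₂ (x + 2 * Real.pi) = y₂ x)
    (hpos₂ : ∀ x : ℝ, 0 < y₂ x) :
    y₁ = y₂ := by
  rcases lt_trichotomy ((y₁ 0)⁻¹ - (y₂ 0)⁻¹) 0 with h | h | h
  · exact absurd (abel_false a c ha0 ha1 hc y₂ y₁ hsol₂ hper₂ hpos₂
      hsol₁ hper₁ hpos₁ (by linarith)) (fun hf => hf)
  · funext x
    have hrep := abel_w_repr a c y₁ y₂ hsol₁ hpos₁ hsol₂ hpos₂ x
    rw [h, zero_mul] at hrep
    have hinv : (y₁ x)⁻¹ = (y₂ x)⁻¹ := by linarith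
    have h1 : y₁ x ≠ 0 := (hpos₁ x).ne'
    have h2 : y₂ x ≠ 0 := (hpos₂ x).ne'
    field_simp at hinv
    exact hinv.symm
  · exact absurd (abel_false a c ha0 ha1 hc y₁ y₂ hsol₁ hper₁ hpos₁
      hsol₂ hper₂ hpos₂ h) (fun hf => hf)
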